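/- Let k be a field and H a k-vector space carrying a unital associative algebra structure (μ, 1) and a counital coassociative coalgebra structure (Δ, ε) with ε(1) = 1. Write Δ(h) = Σ h_{(1)} ⊗ h_{(2)} and let H* be the dual space. Define the linear maps σ'_Ass : H ⊗ H → H ⊗ H, a ⊗ b ↦ ab ⊗ 1, and σ_bi : H ⊗ H* → H* ⊗ H, h ⊗ l ↦ Σ (x ↦ l(x·h_{(2)})) ⊗ h_{(1)}. Then the following are equivalent: (1) the colored Yang–Baxter equation (σ_bi ⊗ id_H)∘(id_H ⊗ σ_bi)∘(σ'_Ass ⊗ id_{H*}) = (id_{H*} ⊗ σ'_Ass)∘(σ_bi ⊗ id_H)∘(id_H ⊗ σ_bi) holds on H ⊗ H ⊗ H*, and σ_bi(1 ⊗ l) = l ⊗ 1 and σ_bi(h ⊗ ε) = ε ⊗ h for all h ∈ H, l ∈ H*; (2) (H, μ, 1, Δ, ε) is a bialgebra, i.e. Δ(ab) = Δ(a)Δ(b), Δ(1) = 1 ⊗ 1, and ε(ab) = ε(a)ε(b) for all a, b ∈ H. -/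

import Mathlib

set_option maxHeartbeats 1000000
set_option synthInstance.maxHeartbeats 400000


open TensorProduct

variable (k : Type*) [Field k]

/-- The colored Yang–Baxter equation on `X ⊗ Y ⊗ Z`. -/
def ColoredYBE (X Y Z : Type*) [AddCommGroup X] [Module k X] [AddCommGroup Y] [Module k Y]
    [AddCommGroup Z] [Module k Z]
    (cXY : X ⊗[k] Y →ₗ[k] Y ⊗[k] X) (cXZ : X ⊗[k] Z →ₗ[k] Z ⊗[k] X)
    (cYZ : Y ⊗[k] Z →ₗ[k] Z ⊗[k] Y) : Prop :=
  (TensorProduct.assoc k Z Y X).toLinearMap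
      ∘ₗ (cYZ.rTensor X)
      ∘ₗ (TensorProduct.assoc k Y Z X).symm.toLinearMap
      ∘ₗ (cXZ.lTensor Y)
      ∘ₗ (TensorProduct.assoc k Y X Z).toLinearMap
      ∘ₗ (cXY.rTensor Z)
      ∘ₗ (TensorProduct.assoc k X Y Z).symm.toLinearMap
    = (cXY.lTensor Z)
      ∘ₗ (TensorProduct.assoc k Z X Y).toLinearMap
      ∘ₗ (cXZ.rTensor Y)
      ∘ₗ (TensorProduct.assoc k X Z Y).symm.toLinearMap
      ∘ₗ (cYZ.lTensor X)

variable (H : Type*) [Ring H] [Algebra k H]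

/-- The bilinear contraction `H ⊗ H* → H*`, `h ⊗ l ↦ (x ↦ l (x * h))`. -/
noncomputable def rightMulDual : H ⊗[k] Module.Dual k H →ₗ[k] Module.Dual k H :=
  TensorProduct.lift
    ((LinearMap.llcomp k H H k).flip ∘ₗ (LinearMap.mul k H).flip)

section

variable [Coalgebra k H]

/-- The braiding `σ_bi : H ⊗ H* → H* ⊗ H`,
`h ⊗ l ↦ Σ (x ↦ l (x · h₍₂₎)) ⊗ h₍₁₎` (Sweedler notation). -/
noncomputable def sigmaBi : H ⊗[k] Module.Dual k H →ₗ[k] Module.Dual k H ⊗[k] H :=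
  (TensorProduct.comm k H (Module.Dual k H)).toLinearMap
    ∘ₗ (LinearMap.lTensor H (rightMulDual k H))
    ∘ₗ (TensorProduct.assoc k H H (Module.Dual k H)).toLinearMap
    ∘ₗ ((Coalgebra.comul (R := k) (A := H)).rTensor (Module.Dual k H))

/-- The right associativity braiding `σ'_Ass : H ⊗ H → H ⊗ H`, `a ⊗ b ↦ ab ⊗ 1`. -/
noncomputable def sigmaAssR : H ⊗[k] H →ₗ[k] H ⊗[k] H :=
  ((TensorProduct.mk k H H).flip 1) ∘ₗ (LinearMap.mul' k H)

end

section Aux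

@[simp] lemma rightMulDual_tmul_apply (v : H) (l : Module.Dual k H) (x : H) :
    rightMulDual k H (v ⊗ₜ[k] l) x = l (x * v) := by
  simp [rightMulDual]

/-- Contraction of the right factor of `H ⊗ H` with a functional. -/
noncomputable def crAux (l : Module.Dual k H) : H ⊗[k] H →ₗ[k] H :=
  (TensorProduct.rid k H).toLinearMap ∘ₗ LinearMap.lTensor H l

@[simp] lemma crAux_tmul (l : Module.Dual k H) (u v : H) :
    crAux k H l (u ⊗ₜ[k] v) = l v • u := by
  simp [crAux]

/-- Functionals on the right factor separate points of `H ⊗ H`. -/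
lemma crAux_inj (t t' : H ⊗[k] H)
    (h : ∀ l : Module.Dual k H, crAux k H l t = crAux k H l t') : t = t' := by
  classical
  let b := Module.Basis.ofVectorSpace k H
  set e := LinearEquiv.lTensor H b.repr ≪≫ₗ
    TensorProduct.finsuppScalarRight k k H (Module.Basis.ofVectorSpaceIndex k H) with he
  apply e.injective
  ext i
  have key : ∀ s : H ⊗[k] H, e s =
      TensorProduct.finsuppScalarRight k k H _ ((b.repr.toLinearMap).lTensor H s) := by
    intro s; rfl
  rw [key t, key t', TensorProduct.finsuppScalarRight_apply,
    TensorProduct.finsuppScalarRight_apply, ← LinearMap.comp_apply,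
    ← LinearMap.comp_apply, ← LinearMap.lTensor_comp]
  simpa [crAux] using h ((Finsupp.lapply i) ∘ₗ b.repr.toLinearMap)

/-- The "inner part" of `sigmaBi`, as a function of an arbitrary tensor replacing `Δ h`. -/
noncomputable def spAux : (H ⊗[k] H) ⊗[k] Module.Dual k H →ₗ[k] Module.Dual k H ⊗[k] H :=
  (TensorProduct.comm k H (Module.Dual k H)).toLinearMap
    ∘ₗ (LinearMap.lTensor H (rightMulDual k H))
    ∘ₗ (TensorProduct.assoc k H H (Module.Dual k H)).toLinearMap

@[simp] lemma spAux_tmul (u v : H) (l : Module.Dual k H) :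
    spAux k H ((u ⊗ₜ[k] v) ⊗ₜ[k] l) = (rightMulDual k H (v ⊗ₜ[k] l)) ⊗ₜ[k] u := by
  simp [spAux]

/-- Evaluation-at-1 contraction `H* ⊗ H → H`. -/
noncomputable def rhoAux : Module.Dual k H ⊗[k] H →ₗ[k] H :=
  TensorProduct.lift ((LinearMap.lsmul k H) ∘ₗ (LinearMap.applyₗ (1 : H)))

@[simp] lemma rhoAux_tmul (m : Module.Dual k H) (h : H) :
    rhoAux k H (m ⊗ₜ[k] h) = m 1 • h := by
  simp [rhoAux]

lemma rhoAux_spAux (t : H ⊗[k] H) (l : Module.Dual k H) :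
    rhoAux k H (spAux k H (t ⊗ₜ[k] l)) = crAux k H l t := by
  induction t using TensorProduct.induction_on with
  | zero => simp
  | tmul u v => simp
  | add s s' hs hs' => simp [add_tmul, hs, hs']

end Aux

variable [Coalgebra k H]

section Aux2

lemma sigmaBi_tmul (h : H) (l : Module.Dual k H) :
    sigmaBi k H (h ⊗ₜ[k] l) = spAux k H ((Coalgebra.comul (R := k) h) ⊗ₜ[k] l) := by
  simp [sigmaBi, spAux]

omit [Coalgebra k H] in
@[simp] lemma sigmaAssR_tmul (a b : H) :
    sigmaAssR k H (a ⊗ₜ[k] b) = (a * b) ⊗ₜ[k] (1 : H) := by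
  simp [sigmaAssR]


omit [Coalgebra k H] in
lemma rmd_assoc (q v : H) (l : Module.Dual k H) :
    rightMulDual k H (q ⊗ₜ[k] rightMulDual k H (v ⊗ₜ[k] l))
      = rightMulDual k H ((q * v) ⊗ₜ[k] l) := by
  ext x; simp [mul_assoc]

omit [Coalgebra k H] in
lemma rmd_one (l : Module.Dual k H) :
    rightMulDual k H ((1 : H) ⊗ₜ[k] l) = l := by
  ext x; simp

omit [Coalgebra k H] in
@[simp] lemma assoc_tmul_one (w : Module.Dual k H ⊗[k] H) :
    (TensorProduct.assoc k (Module.Dual k H) H H) (w ⊗ₜ[k] (1 : H)) =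
      LinearMap.lTensor (Module.Dual k H) ((TensorProduct.mk k H H).flip 1) w := by
  induction w using TensorProduct.induction_on with
  | zero => rw [zero_tmul]; simp
  | tmul m u => simp
  | add x y hx hy => rw [add_tmul, map_add, map_add, hx, hy]

lemma lhs_apply
    (hone : ∀ m : Module.Dual k H, sigmaBi k H ((1 : H) ⊗ₜ[k] m) = m ⊗ₜ[k] (1 : H))
    (a b : H) (l : Module.Dual k H) :
    ((TensorProduct.assoc k (Module.Dual k H) H H).toLinearMap
      ∘ₗ ((sigmaBi k H).rTensor H)
      ∘ₗ (TensorProduct.assoc k H (Module.Dual k H) H).symm.toLinearMap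
      ∘ₗ ((sigmaBi k H).lTensor H)
      ∘ₗ (TensorProduct.assoc k H H (Module.Dual k H)).toLinearMap
      ∘ₗ ((sigmaAssR k H).rTensor (Module.Dual k H))
      ∘ₗ (TensorProduct.assoc k H H (Module.Dual k H)).symm.toLinearMap)
      (a ⊗ₜ[k] (b ⊗ₜ[k] l))
    = LinearMap.lTensor (Module.Dual k H) ((TensorProduct.mk k H H).flip 1)
        (spAux k H ((Coalgebra.comul (R := k) (a * b)) ⊗ₜ[k] l)) := by
  simp only [LinearMap.comp_apply, LinearEquiv.coe_coe, TensorProduct.assoc_symm_tmul,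
    LinearMap.rTensor_tmul, sigmaAssR_tmul, TensorProduct.assoc_tmul, LinearMap.lTensor_tmul,
    hone, sigmaBi_tmul, assoc_tmul_one]

lemma rhs_apply (a b : H) (l : Module.Dual k H) :
    (((sigmaAssR k H).lTensor (Module.Dual k H))
      ∘ₗ (TensorProduct.assoc k (Module.Dual k H) H H).toLinearMap
      ∘ₗ ((sigmaBi k H).rTensor H)
      ∘ₗ (TensorProduct.assoc k H (Module.Dual k H) H).symm.toLinearMap
      ∘ₗ ((sigmaBi k H).lTensor H)) (a ⊗ₜ[k] (b ⊗ₜ[k] l))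
    = LinearMap.lTensor (Module.Dual k H) ((TensorProduct.mk k H H).flip 1)
        (spAux k H ((Coalgebra.comul (R := k) a * Coalgebra.comul (R := k) b) ⊗ₜ[k] l)) := by
  simp only [LinearMap.comp_apply, LinearEquiv.coe_coe, LinearMap.lTensor_tmul, sigmaBi_tmul k H b]
  generalize Coalgebra.comul (R := k) b = t
  induction t using TensorProduct.induction_on with
  | zero => simp
  | tmul u v =>
      simp only [spAux_tmul, TensorProduct.assoc_symm_tmul, LinearMap.rTensor_tmul,
        sigmaBi_tmul k H a]
      generalize Coalgebra.comul (R := k) a = s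
      induction s using TensorProduct.induction_on with
      | zero => simp
      | tmul p q =>
          simp [Algebra.TensorProduct.tmul_mul_tmul, rmd_assoc]
      | add s s' hs hs' =>
          simp only [add_tmul, map_add, add_mul, hs, hs']
  | add t t' ht ht' =>
      simp only [add_tmul, tmul_add, map_add, mul_add, ht, ht']

lemma lTensor_mk_one_inj (hc1 : Coalgebra.counit (R := k) (A := H) 1 = 1)
    {w w' : Module.Dual k H ⊗[k] H}
    (h : LinearMap.lTensor (Module.Dual k H) ((TensorProduct.mk k H H).flip 1) w
        = LinearMap.lTensor (Module.Dual k H) ((TensorProduct.mk k H H).flip 1) w') :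
    w = w' := by
  have hcomp : (crAux k H (Coalgebra.counit (R := k)))
      ∘ₗ ((TensorProduct.mk k H H).flip 1) = LinearMap.id := by
    ext u; simp [hc1]
  have h2 := congrArg (LinearMap.lTensor (Module.Dual k H)
    (crAux k H (Coalgebra.counit (R := k)))) h
  rwa [← LinearMap.comp_apply, ← LinearMap.comp_apply, ← LinearMap.lTensor_comp, hcomp,
    LinearMap.lTensor_id, LinearMap.id_apply, LinearMap.id_apply] at h2

/-- Evaluation contraction for the counit computation. -/
noncomputable def psiAux (a : H) : Module.Dual k H ⊗[k] H →ₗ[k] k :=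
  TensorProduct.lift
    ((LinearMap.applyₗ a).smulRight (Coalgebra.counit (R := k) (A := H)))

@[simp] lemma psiAux_tmul (a : H) (m : Module.Dual k H) (h : H) :
    psiAux k H a (m ⊗ₜ[k] h) = m a * Coalgebra.counit (R := k) h := by
  simp [psiAux]

lemma psi_spAux (a : H) (t : H ⊗[k] H) :
    psiAux k H a (spAux k H (t ⊗ₜ[k] (Coalgebra.counit (R := k) (A := H))))
      = Coalgebra.counit (R := k)
          (a * (TensorProduct.lid k H ((Coalgebra.counit (R := k) (A := H)).rTensor H t))) := by
  induction t using TensorProduct.induction_on with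
  | zero => simp
  | tmul u v => simp [mul_smul_comm, mul_comm]
  | add s s' hs hs' => simp [add_tmul, mul_add, hs, hs']

lemma spAux_counit
    (he : ∀ a b : H, Coalgebra.counit (R := k) (A := H) (a * b)
        = Coalgebra.counit (R := k) (A := H) a * Coalgebra.counit (R := k) (A := H) b)
    (t : H ⊗[k] H) :
    spAux k H (t ⊗ₜ[k] (Coalgebra.counit (R := k) (A := H)))
      = (Coalgebra.counit (R := k) (A := H)) ⊗ₜ[k] crAux k H (Coalgebra.counit (R := k)) t := by
  induction t using TensorProduct.induction_on with
  | zero => simp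
  | tmul u v =>
      have : rightMulDual k H (v ⊗ₜ[k] (Coalgebra.counit (R := k) (A := H)))
          = Coalgebra.counit (R := k) (A := H) v • Coalgebra.counit (R := k) (A := H) := by
        ext x; simp [he, mul_comm]
      simp [this, smul_tmul]
  | add s s' hs hs' => simp [add_tmul, tmul_add, hs, hs']

lemma crAux_counit_comul (h : H) :
    crAux k H (Coalgebra.counit (R := k)) (Coalgebra.comul (R := k) h) = h := by
  have := Coalgebra.lTensor_counit_comul (R := k) h
  simp [crAux, this]

end Aux2

/-- For an algebra-and-coalgebra `H` with `ε(1) = 1`, the colored Yang–Baxter equation on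
`H ⊗ H ⊗ H*` for `(σ'_Ass, σ_bi, σ_bi)` together with the unit naturality of `σ_bi` is
equivalent to the bialgebra compatibility conditions. -/
theorem ybe_sigma_bi_iff_bialgebra
    (hcounit_one : Coalgebra.counit (R := k) (A := H) 1 = 1) :
    (ColoredYBE k H H (Module.Dual k H)
        (sigmaAssR k H) (sigmaBi k H) (sigmaBi k H)
      ∧ (∀ l : Module.Dual k H, sigmaBi k H ((1 : H) ⊗ₜ[k] l) = l ⊗ₜ[k] (1 : H))
      ∧ (∀ h : H, sigmaBi k H (h ⊗ₜ[k] (Coalgebra.counit (R := k) (A := H)))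
          = (Coalgebra.counit (R := k) (A := H)) ⊗ₜ[k] h))
    ↔ ((∀ a b : H, Coalgebra.comul (R := k) (a * b)
          = Coalgebra.comul (R := k) a * Coalgebra.comul (R := k) b)
      ∧ Coalgebra.comul (R := k) (1 : H) = 1
      ∧ (∀ a b : H, Coalgebra.counit (R := k) (A := H) (a * b)
          = Coalgebra.counit (R := k) (A := H) a * Coalgebra.counit (R := k) (A := H) b)) := by
  constructor
  · rintro ⟨hY, hone, heps⟩
    refine ⟨?_, ?_, ?_⟩
    · intro a b
      have hy := hY
      unfold ColoredYBE at hy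
      refine crAux_inj k H _ _ (fun l => ?_)
      have h2 := LinearMap.congr_fun hy (a ⊗ₜ[k] (b ⊗ₜ[k] l))
      rw [lhs_apply k H hone a b l, rhs_apply k H a b l] at h2
      have h3 := lTensor_mk_one_inj k H hcounit_one h2
      have h4 := congrArg (rhoAux k H) h3
      rwa [rhoAux_spAux, rhoAux_spAux] at h4
    · rw [show (1 : H ⊗[k] H) = (1 : H) ⊗ₜ[k] (1 : H) from Algebra.TensorProduct.one_def]
      refine crAux_inj k H _ _ (fun l => ?_)
      have h := hone l
      rw [sigmaBi_tmul] at h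
      have h2 := congrArg (rhoAux k H) h
      rw [rhoAux_spAux] at h2
      simpa using h2
    · intro a b
      have h := heps b
      rw [sigmaBi_tmul] at h
      have h2 := congrArg (psiAux k H a) h
      rw [psi_spAux] at h2
      simpa using h2
  · rintro ⟨hm, h1, he⟩
    have hone : ∀ m : Module.Dual k H, sigmaBi k H ((1 : H) ⊗ₜ[k] m) = m ⊗ₜ[k] (1 : H) := by
      intro m
      rw [sigmaBi_tmul, h1, Algebra.TensorProduct.one_def, spAux_tmul, rmd_one]
    refine ⟨?_, hone, ?_⟩
    · unfold ColoredYBE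
      apply TensorProduct.ext'
      intro a y
      induction y using TensorProduct.induction_on with
      | zero => simp [tmul_zero]
      | tmul b l => rw [lhs_apply k H hone a b l, rhs_apply k H a b l, hm a b]
      | add y z hy hz => simp only [tmul_add, map_add, hy, hz]
    · intro h
      rw [sigmaBi_tmul, spAux_counit k H he, crAux_counit_comul]
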